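/- Let G be a group acting on a set X, let φ ∈ G, and suppose every nonzero power of φ has fixed-point set exactly {p, q} ⊆ X with p ≠ q. Then the commensurator of the cyclic subgroup ⟨φ⟩ in G is contained in the setwise stabilizer of {p, q} in G. -/

import Mathlib

open Pointwise

theorem stmt11 {G X : Type*} [Group G] [MulAction G X]
    (φ : G) (p q : X) (hpq : p ≠ q)
    (hFix : ∀ n : ℤ, n ≠ 0 → {x : X | φ ^ n • x = x} = {p, q}) :
    ∀ g ∈ Subgroup.Commensurable.commensurator (Subgroup.zpowers φ),
      ({g • p, g • q} : Set X) = {p, q} := by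
  intro g hg
  -- Obtain m n ≠ 0 with g * φ^m * g⁻¹ = φ^n
  obtain ⟨m, n, hm, hn, hconj⟩ :
      ∃ m n : ℤ, m ≠ 0 ∧ n ≠ 0 ∧ g * φ ^ m * g⁻¹ = φ ^ n := by
    by_cases hfin : IsOfFinOrder φ
    · obtain ⟨k, hk, hk1⟩ := isOfFinOrder_iff_zpow_eq_one.mp hfin
      exact ⟨k, k, hk, hk, by rw [hk1]; group⟩
    · rw [Subgroup.Commensurable.commensurator_mem_iff] at hg
      have hrel := hg.1
      obtain ⟨k, hk0, _, hkmem⟩ :=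
        Subgroup.exists_pow_mem_of_relIndex_ne_zero hrel (Subgroup.mem_zpowers φ)
      have hmem1 : φ ^ k ∈ ConjAct.toConjAct g • Subgroup.zpowers φ := hkmem.1
      rw [Subgroup.mem_pointwise_smul_iff_inv_smul_mem] at hmem1
      have hsmul : (ConjAct.toConjAct g)⁻¹ • φ ^ k = g⁻¹ * φ ^ k * g := by
        rw [ConjAct.smul_def]
        simp [mul_assoc]
      rw [hsmul] at hmem1
      obtain ⟨m, hmeq⟩ := hmem1
      refine ⟨m, (k : ℤ), ?_, ?_, ?_⟩
      · rintro rfl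
        apply hfin
        rw [isOfFinOrder_iff_zpow_eq_one]
        refine ⟨k, by exact_mod_cast hk0.ne', ?_⟩
        have : g⁻¹ * φ ^ k * g = 1 := by rw [← hmeq]; simp
        have h2 : φ ^ k = 1 := by
          have := congrArg (fun x => g * x * g⁻¹) this
          simp [mul_assoc] at this
          simpa [mul_assoc] using this
        exact_mod_cast h2
      · exact_mod_cast hk0.ne'
      · have hmeq' : φ ^ m = g⁻¹ * φ ^ k * g := hmeq
        rw [hmeq', zpow_natCast]
        group
  -- Now show g • p and g • q are fixed by φ ^ n
  have key : ∀ x : X, x ∈ ({p, q} : Set X) → g • x ∈ ({p, q} : Set X) := by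
    intro x hx
    rw [← hFix n hn]
    have hxfix : φ ^ m • x = x := by
      rw [← hFix m hm] at hx
      exact hx
    show φ ^ n • g • x = g • x
    rw [← hconj, mul_smul, mul_smul, inv_smul_smul, hxfix]
  have hp' := key p (Or.inl rfl)
  have hq' := key q (Or.inr rfl)
  have hne : g • p ≠ g • q := fun h => hpq (MulAction.injective g h)
  rcases hp' with h1 | h1 <;> rcases hq' with h2 | h2
  · exact absurd (h1.trans h2.symm) hne
  · rw [h1, h2]
  · rw [h1, h2, Set.pair_comm]
  · exact absurd (h1.trans h2.symm) hne
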